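/- arXiv:2002.05974 — 2 statements merged into one kernel-verified Lean document; each statement's English description precedes it below -/
import Mathlib

section
/- Let g ≥ 1 and let Γ' be a finitely generated group whose abelianization is a free abelian group of rank g − 1. Then ks_{A4}(ℤ * Γ') = 12·ks_{A4}(Γ') − 6·3^{g−1} − 2·4^{g−1}; in particular, 12 divides ks_{A4}(ℤ * Γ') + 6·3^{g−1} + 2·4^{g−1}. -/
/-- The conjugation equivalence on homomorphisms `Γ →* G`. -/
def homConj (Γ G : Type*) [Group Γ] [Group G] : Setoid (Γ →* G) where
  r φ ψ := ∃ g : G, ∀ x, ψ x = g * φ x * g⁻¹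
  iseqv := by
    refine ⟨fun φ => ⟨1, by simp⟩, ?_, ?_⟩
    · rintro φ ψ ⟨g, hg⟩
      exact ⟨g⁻¹, fun x => by rw [hg x]; group⟩
    · rintro φ ψ χ ⟨g, hg⟩ ⟨h, hh⟩
      exact ⟨h * g, fun x => by rw [hh x, hg x]; group⟩

/-- `ks G Γ`: number of conjugacy classes of homomorphisms `Γ →* G`. -/
noncomputable def ks (G Γ : Type*) [Group G] [Group Γ] : ℕ :=
  Nat.card (Quotient (homConj Γ G))

/-- `ksw G Γ`: number of homomorphisms `Γ →* G`. -/
noncomputable def ksw (G Γ : Type*) [Group G] [Group Γ] : ℕ :=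
  Nat.card (Γ →* G)

/-- `ksSub G H Γ`: the number of conjugacy classes of homomorphisms `Γ →* G` whose
image is contained in some subgroup of `G` isomorphic to `H`. -/
noncomputable def ksSub (G : Type*) [Group G] (H : Type*) [Group H] (Γ : Type*) [Group Γ] : ℕ :=
  Nat.card (Quotient (Setoid.comap
    (Subtype.val : {φ : Γ →* G // ∃ K : Subgroup G, Nonempty (K ≃* H) ∧ φ.range ≤ K} → (Γ →* G))
    (homConj Γ G)))

/-- Number of conjugacy classes of homomorphisms `Γ →* G` satisfying a property `P`. -/
noncomputable def ksRestrict (G Γ : Type*) [Group G] [Group Γ] (P : (Γ →* G) → Prop) : ℕ :=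
  Nat.card (Quotient (Setoid.comap
    (Subtype.val : {φ : Γ →* G // P φ} → (Γ →* G)) (homConj Γ G)))

/-- A maximal abelian subgroup. -/
def IsMaximalAbelian {G : Type*} [Group G] (K : Subgroup G) : Prop :=
  IsMulCommutative K ∧ ∀ K' : Subgroup G, IsMulCommutative K' → K ≤ K' → K' = K

abbrev A4 : Type := alternatingGroup (Fin 4)
abbrev A5 : Type := alternatingGroup (Fin 5)
abbrev V4 : Type := Multiplicative (ZMod 2 × ZMod 2)
abbrev Z3 : Type := Multiplicative (ZMod 3)
abbrev Z5 : Type := Multiplicative (ZMod 5)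
/-- The free abelian group of rank `g`, written multiplicatively. -/
abbrev Zg (g : ℕ) : Type := Multiplicative (Fin g → ℤ)


section KSAux
open MulAction
variable {Γ G : Type*} [Group Γ] [Group G]

instance instConjActHom : MulAction (ConjAct G) (Γ →* G) where
  smul u φ :=
  { toFun := fun x => u • φ x
    map_one' := by simp
    map_mul' := fun a b => by simp [smul_mul']
  }
  one_smul φ := MonoidHom.ext fun x => one_smul _ _
  mul_smul u v φ := MonoidHom.ext fun x => mul_smul u v (φ x)

lemma conjAct_smul_hom_apply (u : ConjAct G) (φ : Γ →* G) (x : Γ) :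
    (u • φ) x = u • φ x := rfl

lemma homConj_eq_orbitRel : homConj Γ G = orbitRel (ConjAct G) (Γ →* G) := by
  apply Setoid.ext
  intro φ ψ
  constructor
  · rintro ⟨g, hg⟩
    refine MulAction.mem_orbit_iff.mpr ⟨ConjAct.toConjAct g⁻¹, MonoidHom.ext fun x => ?_⟩
    rw [conjAct_smul_hom_apply, ConjAct.smul_def, ConjAct.ofConjAct_toConjAct, hg x]
    group
  · rintro ⟨u, hu⟩
    refine ⟨(ConjAct.ofConjAct u)⁻¹, fun x => ?_⟩
    rw [← hu, conjAct_smul_hom_apply, ConjAct.smul_def]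
    group

lemma finite_monoidHom [Finite G] (h : Group.FG Γ) : Finite (Γ →* G) := by
  obtain ⟨S, hS, hfin⟩ := Group.fg_iff.mp h
  haveI := hfin.fintype
  refine Finite.of_injective (fun φ : Γ →* G => (fun s : S => φ s)) ?_
  intro φ ψ hfg
  ext x
  have h1 : Set.EqOn φ ψ S := fun s hs => congrFun hfg ⟨s, hs⟩
  have h2 : Set.EqOn φ ψ (Subgroup.closure S) := MonoidHom.eqOn_closure h1
  have hx : x ∈ Subgroup.closure S := hS.symm ▸ Subgroup.mem_top x
  exact h2 hx

def mulHomPrecompEquiv {A B C : Type*} [MulOneClass A] [MulOneClass B] [MulOneClass C]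
    (e : A ≃* B) : (B →* C) ≃ (A →* C) where
  toFun f := f.comp e.toMonoidHom
  invFun f := f.comp e.symm.toMonoidHom
  left_inv f := MonoidHom.ext fun b => by simp
  right_inv f := MonoidHom.ext fun a => by simp

def addHomPrecompEquiv {A B C : Type*} [AddZeroClass A] [AddZeroClass B] [AddZeroClass C]
    (e : A ≃+ B) : (B →+ C) ≃ (A →+ C) where
  toFun f := f.comp e.toAddMonoidHom
  invFun f := f.comp e.symm.toAddMonoidHom
  left_inv f := AddMonoidHom.ext fun b => by simp
  right_inv f := AddMonoidHom.ext fun a => by simp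

lemma card_hom_comm_eq {K : Type*} [CommGroup K] {n : ℕ}
    (e : Abelianization Γ ≃* Multiplicative (Fin n → ℤ)) :
    Nat.card (Γ →* K) = Nat.card K ^ n := by
  have E : (Γ →* K) ≃ (Fin n → Additive K) :=
    (Abelianization.lift).trans <|
    (mulHomPrecompEquiv e.symm).trans <|
    (MonoidHom.toAdditiveRight).trans <|
    (addHomPrecompEquiv (Finsupp.addEquivFunOnFinite)).trans <|
    (Finsupp.liftAddHom.toEquiv.symm).trans <|
    (Equiv.piCongrRight fun _ => (zmultiplesHom (Additive K)).symm)
  rw [Nat.card_congr E, Nat.card_fun, Nat.card_congr (Additive.toMul (α := K))]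
  simp

lemma mem_fixedBy_hom_iff (u : ConjAct G) (φ : Γ →* G) :
    φ ∈ fixedBy (Γ →* G) u ↔ ∀ x, ConjAct.ofConjAct u * φ x = φ x * ConjAct.ofConjAct u := by
  rw [mem_fixedBy]
  constructor
  · intro h x
    have hx := congrArg (fun ψ : Γ →* G => ψ x) h
    simp only [conjAct_smul_hom_apply, ConjAct.smul_def] at hx
    rw [mul_inv_eq_iff_eq_mul] at hx
    exact hx
  · intro h
    ext x
    rw [conjAct_smul_hom_apply, ConjAct.smul_def, mul_inv_eq_iff_eq_mul, h x]

def fixedByHomEquiv (u : ConjAct G) :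
    (fixedBy (Γ →* G) u) ≃
      (Γ →* (Subgroup.centralizer {ConjAct.ofConjAct u} : Subgroup G)) where
  toFun φ := MonoidHom.codRestrict (φ : Γ →* G) _ fun x => Subgroup.mem_centralizer_iff.mpr (by
    intro m hm
    rw [Set.mem_singleton_iff] at hm
    rw [hm]
    exact (mem_fixedBy_hom_iff u φ.1).mp φ.2 x)
  invFun ψ := ⟨((Subgroup.centralizer _).subtype).comp ψ, (mem_fixedBy_hom_iff _ _).mpr fun x =>
    Subgroup.mem_centralizer_iff.mp (ψ x).2 _ (Set.mem_singleton _)⟩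
  left_inv φ := Subtype.ext (MonoidHom.ext fun x => rfl)
  right_inv ψ := MonoidHom.ext fun x => Subtype.ext rfl

def fixedByCoprodEquiv (u : ConjAct G) :
    (fixedBy (Monoid.Coprod (Multiplicative ℤ) Γ →* G) u) ≃
      (Subgroup.centralizer {ConjAct.ofConjAct u} : Subgroup G) × (fixedBy (Γ →* G) u) where
  toFun φ :=
    (⟨φ.1 (Monoid.Coprod.inl (Multiplicative.ofAdd 1)), Subgroup.mem_centralizer_iff.mpr (by
        intro m hm
        rw [Set.mem_singleton_iff] at hm
        rw [hm]
        exact (mem_fixedBy_hom_iff u φ.1).mp φ.2 _)⟩,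
     ⟨φ.1.comp Monoid.Coprod.inr, (mem_fixedBy_hom_iff u _).mpr fun x =>
        (mem_fixedBy_hom_iff u φ.1).mp φ.2 _⟩)
  invFun p :=
    ⟨Monoid.Coprod.lift (zpowersHom G p.1.1) p.2.1, by
      show u • _ = _
      refine Monoid.Coprod.hom_ext (MonoidHom.ext_mint ?_) (MonoidHom.ext fun x => ?_)
      · simp only [MonoidHom.comp_apply, conjAct_smul_hom_apply,
          Monoid.Coprod.lift_apply_inl, zpowersHom_apply, toAdd_ofAdd, zpow_one,
          ConjAct.smul_def]
        rw [mul_inv_eq_iff_eq_mul]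
        exact Subgroup.mem_centralizer_iff.mp p.1.2 _ (Set.mem_singleton _)
      · simp only [MonoidHom.comp_apply, conjAct_smul_hom_apply,
          Monoid.Coprod.lift_apply_inr, ConjAct.smul_def]
        rw [mul_inv_eq_iff_eq_mul]
        exact (mem_fixedBy_hom_iff u p.2.1).mp p.2.2 x⟩
  left_inv φ := Subtype.ext <| Monoid.Coprod.hom_ext
    (MonoidHom.ext_mint (by simp [Monoid.Coprod.lift_apply_inl]))
    (by ext x; simp [Monoid.Coprod.lift_apply_inr])
  right_inv p := by
    refine Prod.ext (Subtype.ext ?_) (Subtype.ext (MonoidHom.ext fun x => ?_))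
    · simp [Monoid.Coprod.lift_apply_inl]
    · simp [Monoid.Coprod.lift_apply_inr]

lemma burnside_natCard {H X : Type*} [Group H] [Fintype H] [MulAction H X] [Finite X] :
    ∑ u : H, Nat.card (fixedBy X u) = Nat.card (Quotient (orbitRel H X)) * Fintype.card H := by
  letI := Fintype.ofFinite X
  letI : ∀ u : H, Fintype (fixedBy X u) := fun u => Fintype.ofFinite _
  letI : Fintype (Quotient (orbitRel H X)) := Fintype.ofFinite _
  simp_rw [Nat.card_eq_fintype_card]
  exact MulAction.sum_card_fixedBy_eq_card_orbits_mul_card_group H X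

end KSAux

section A4Facts
open MulAction

abbrev c4 (g : A4) : ℕ := (Finset.univ.filter fun h : A4 => g * h = h * g).card

lemma card_centralizer_eq (g : A4) :
    Nat.card (Subgroup.centralizer ({g} : Set A4) : Subgroup A4) = c4 g := by
  have e : (Subgroup.centralizer ({g} : Set A4) : Subgroup A4) ≃ {h : A4 // g * h = h * g} :=
    Equiv.subtypeEquivRight fun h => by
      constructor
      · intro hh
        exact Subgroup.mem_centralizer_iff.mp hh g (Set.mem_singleton _)
      · intro hh
        refine Subgroup.mem_centralizer_iff.mpr fun m hm => ?_
        rw [Set.mem_singleton_iff] at hm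
        rw [hm]
        exact hh
  rw [Nat.card_congr e, Nat.card_eq_fintype_card, Fintype.card_subtype]

lemma A4fact1 : ∀ g : A4, g = 1 ∨ ∀ h k : A4, g * h = h * g → g * k = k * g → h * k = k * h := by
  decide

lemma A4fact2 : ∀ g : A4, g = 1 ∨ c4 g = 4 ∨ c4 g = 3 := by decide

lemma A4fact3 : ((Finset.univ.erase (1 : A4)).filter fun g => c4 g = 4).card = 3 := by decide

lemma A4fact4 : ((Finset.univ.erase (1 : A4)).filter fun g => ¬ c4 g = 4).card = 8 := by decide

lemma A4fact5 : c4 (1 : A4) = 12 := by decide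

lemma A4card12 : Fintype.card (ConjAct A4) = 12 := by
  rw [ConjAct.card]
  decide

lemma sum_A4 (F : A4 → ℕ) (a b : ℕ)
    (h4 : ∀ gg : A4, gg ≠ 1 → c4 gg = 4 → F gg = b)
    (h3 : ∀ gg : A4, gg ≠ 1 → c4 gg = 3 → F gg = a) :
    ∑ gg : A4, F gg = F 1 + (3 * b + 8 * a) := by
  rw [← Finset.add_sum_erase Finset.univ F (Finset.mem_univ (1 : A4))]
  congr 1
  rw [← Finset.sum_filter_add_sum_filter_not (Finset.univ.erase (1 : A4))
      (fun gg => c4 gg = 4) F]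
  have k1 : ∀ gg ∈ (Finset.univ.erase (1 : A4)).filter (fun gg => c4 gg = 4), F gg = b :=
    fun gg hg => h4 gg (Finset.mem_erase.mp (Finset.mem_filter.mp hg).1).1
      (Finset.mem_filter.mp hg).2
  have k2 : ∀ gg ∈ (Finset.univ.erase (1 : A4)).filter (fun gg => ¬ c4 gg = 4), F gg = a := by
    intro gg hg
    have h1 := (Finset.mem_erase.mp (Finset.mem_filter.mp hg).1).1
    have h2 := (Finset.mem_filter.mp hg).2
    rcases A4fact2 gg with h | h | h
    · exact absurd h h1
    · exact absurd h h2
    · exact h3 gg h1 h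
  rw [Finset.sum_congr rfl k1, Finset.sum_congr rfl k2, Finset.sum_const, Finset.sum_const,
    A4fact3, A4fact4, smul_eq_mul, smul_eq_mul]

end A4Facts

theorem statement_16 (g : ℕ) (hg : 1 ≤ g) (Γ' : Type*) [Group Γ'] (hΓ' : Group.FG Γ')
    (hab : Nonempty (Abelianization Γ' ≃* Zg (g - 1))) :
    (ks A4 (Monoid.Coprod (Multiplicative ℤ) Γ') : ℤ) =
        12 * (ks A4 Γ' : ℤ) - 6 * 3 ^ (g - 1) - 2 * 4 ^ (g - 1) ∧
    (12 : ℤ) ∣ (ks A4 (Monoid.Coprod (Multiplicative ℤ) Γ') : ℤ)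
        + 6 * 3 ^ (g - 1) + 2 * 4 ^ (g - 1) := by
  classical
  obtain ⟨e⟩ := hab
  set n := g - 1 with hn
  haveI hXfin : Finite (Γ' →* A4) := finite_monoidHom hΓ'
  haveI : Finite (Multiplicative ℤ →* A4) := Finite.of_equiv _ (zpowersHom A4)
  haveI hYfin : Finite (Monoid.Coprod (Multiplicative ℤ) Γ' →* A4) :=
    Finite.of_equiv _ Monoid.Coprod.liftEquiv
  set x := Nat.card (Γ' →* A4) with hx
  have hfixX : ∀ gg : A4, Nat.card (MulAction.fixedBy (Γ' →* A4) (ConjAct.toConjAct gg)) =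
      if gg = 1 then x else c4 gg ^ n := by
    intro gg
    by_cases h1 : gg = 1
    · subst h1
      rw [if_pos rfl, map_one, MulAction.fixedBy_one_eq_univ,
        Nat.card_congr (Equiv.Set.univ _)]
    · rw [if_neg h1, Nat.card_congr (fixedByHomEquiv (ConjAct.toConjAct gg)),
        ConjAct.ofConjAct_toConjAct]
      have hcomm : ∀ a b : (Subgroup.centralizer ({gg} : Set A4) : Subgroup A4),
          a * b = b * a := by
        rcases A4fact1 gg with h | h
        · exact absurd h h1
        · rintro ⟨a, ha⟩ ⟨b, hb⟩
          apply Subtype.ext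
          exact h a b (Subgroup.mem_centralizer_iff.mp ha gg (Set.mem_singleton _))
            (Subgroup.mem_centralizer_iff.mp hb gg (Set.mem_singleton _))
      letI : CommGroup (Subgroup.centralizer ({gg} : Set A4) : Subgroup A4) :=
        { (inferInstance : Group (Subgroup.centralizer ({gg} : Set A4) : Subgroup A4)) with
          mul_comm := hcomm }
      rw [card_hom_comm_eq e, card_centralizer_eq]
  have hfixY : ∀ gg : A4,
      Nat.card (MulAction.fixedBy (Monoid.Coprod (Multiplicative ℤ) Γ' →* A4)
        (ConjAct.toConjAct gg)) =
      c4 gg * Nat.card (MulAction.fixedBy (Γ' →* A4) (ConjAct.toConjAct gg)) := by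
    intro gg
    rw [Nat.card_congr (fixedByCoprodEquiv (ConjAct.toConjAct gg)), Nat.card_prod,
      ConjAct.ofConjAct_toConjAct, card_centralizer_eq]
  have hbX : ks A4 Γ' * 12 = x + (3 * 4 ^ n + 8 * 3 ^ n) := by
    have hb := burnside_natCard (H := ConjAct A4) (X := Γ' →* A4)
    rw [A4card12] at hb
    have hks : ks A4 Γ' = Nat.card (Quotient (MulAction.orbitRel (ConjAct A4) (Γ' →* A4))) := by
      unfold ks
      rw [homConj_eq_orbitRel]
    rw [hks, ← hb,
      ← Function.Bijective.sum_comp (ConjAct.toConjAct (G := A4)).bijective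
        (fun u => Nat.card (MulAction.fixedBy (Γ' →* A4) u))]
    rw [sum_A4 (fun gg => Nat.card (MulAction.fixedBy (Γ' →* A4) (ConjAct.toConjAct gg)))
      (3 ^ n) (4 ^ n)
      (fun gg hg hc => by simp only [hfixX, if_neg hg, hc])
      (fun gg hg hc => by simp only [hfixX, if_neg hg, hc])]
    rw [hfixX 1, if_pos rfl]
  have hbY : ks A4 (Monoid.Coprod (Multiplicative ℤ) Γ') * 12 =
      12 * x + (3 * (4 * 4 ^ n) + 8 * (3 * 3 ^ n)) := by
    have hb := burnside_natCard (H := ConjAct A4)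
      (X := Monoid.Coprod (Multiplicative ℤ) Γ' →* A4)
    rw [A4card12] at hb
    have hks : ks A4 (Monoid.Coprod (Multiplicative ℤ) Γ') =
        Nat.card (Quotient (MulAction.orbitRel (ConjAct A4)
          (Monoid.Coprod (Multiplicative ℤ) Γ' →* A4))) := by
      unfold ks
      rw [homConj_eq_orbitRel]
    rw [hks, ← hb,
      ← Function.Bijective.sum_comp (ConjAct.toConjAct (G := A4)).bijective
        (fun u => Nat.card (MulAction.fixedBy (Monoid.Coprod (Multiplicative ℤ) Γ' →* A4) u))]
    rw [sum_A4 (fun gg => Nat.card (MulAction.fixedBy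
        (Monoid.Coprod (Multiplicative ℤ) Γ' →* A4) (ConjAct.toConjAct gg)))
      (3 * 3 ^ n) (4 * 4 ^ n)
      (fun gg hg hc => by simp only [hfixY, hfixX, if_neg hg, hc])
      (fun gg hg hc => by simp only [hfixY, hfixX, if_neg hg, hc])]
    rw [hfixY 1, hfixX 1, if_pos rfl, A4fact5]
  have hY' : ks A4 (Monoid.Coprod (Multiplicative ℤ) Γ') = x + 4 ^ n + 2 * 3 ^ n := by
    have h12 : ks A4 (Monoid.Coprod (Multiplicative ℤ) Γ') * 12 =
        (x + 4 ^ n + 2 * 3 ^ n) * 12 := by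
      rw [hbY]; ring
    exact Nat.eq_of_mul_eq_mul_right (by norm_num) h12
  have h1 : (ks A4 (Monoid.Coprod (Multiplicative ℤ) Γ') : ℤ) =
      (x : ℤ) + 4 ^ n + 2 * 3 ^ n := by exact_mod_cast congrArg (Nat.cast (R := ℤ)) hY'
  have h2 : (ks A4 Γ' : ℤ) * 12 = (x : ℤ) + 3 * 4 ^ n + 8 * 3 ^ n := by
    have := congrArg (Nat.cast (R := ℤ)) hbX
    push_cast at this
    linarith [this]
  constructor
  · linarith [h1, h2]
  · exact ⟨(ks A4 Γ' : ℤ), by linarith [h1, h2]⟩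
end

section
/- Let g ≥ 1 and let Γ' be a finitely generated group whose abelianization is a free abelian group of rank g − 1. Then ks_{A5}(ℤ * Γ') = 60·ks_{A5}(Γ') − 19·3^{g−1} − 14·4^{g−1} − 22·5^{g−1}; in particular, 60 divides ks_{A5}(ℤ * Γ') + 19·3^{g−1} + 14·4^{g−1} + 22·5^{g−1}. -/
section Aux
variable {Γ G H K C : Type*} [Group Γ] [Group G] [Group H] [Group K] [Group C]

/-- Postcomposition with a `MulEquiv`. -/
def KSAux.postcompEquiv (e : H ≃* K) : (Γ →* H) ≃ (Γ →* K) where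
  toFun f := e.toMonoidHom.comp f
  invFun f := e.symm.toMonoidHom.comp f
  left_inv f := by ext x; simp
  right_inv f := by ext x; simp

/-- Precomposition with a `MulEquiv`. -/
def KSAux.precompEquiv (e : H ≃* K) : (K →* C) ≃ (H →* C) where
  toFun f := f.comp e.toMonoidHom
  invFun f := f.comp e.symm.toMonoidHom
  left_inv f := by ext x; simp
  right_inv f := by ext x; simp

lemma KSAux.finite_hom (hΓ : Group.FG Γ) [Finite G] : Finite (Γ →* G) := by
  obtain ⟨S, hS⟩ := hΓ.1
  refine Finite.of_injective (fun φ : Γ →* G => (fun s : S => φ s)) ?_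
  intro φ ψ h
  refine MonoidHom.eq_of_eqOn_dense hS ?_
  intro x hx
  exact congrFun h ⟨x, hx⟩

/-- Conjugation action of `G` on `Γ →* G`. -/
def KSAux.conjSMul (Γ G : Type*) [Group Γ] [Group G] : MulAction G (Γ →* G) where
  smul g φ := (MulAut.conj g).toMonoidHom.comp φ
  one_smul φ := by
    ext x
    show (1:G) * φ x * (1:G)⁻¹ = φ x
    simp
  mul_smul g h φ := by
    ext x
    show (g * h) * φ x * (g * h)⁻¹ = g * (h * φ x * h⁻¹) * g⁻¹
    group

lemma KSAux.homConj_eq_orbitRel (Γ G : Type*) [Group Γ] [Group G] :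
    homConj Γ G = @MulAction.orbitRel G (Γ →* G) _ (KSAux.conjSMul Γ G) := by
  letI := KSAux.conjSMul Γ G
  ext φ ψ
  show (∃ g : G, ∀ x, ψ x = g * φ x * g⁻¹) ↔ φ ∈ MulAction.orbit G ψ
  constructor
  · rintro ⟨g, hg⟩
    refine ⟨g⁻¹, ?_⟩
    ext x
    show g⁻¹ * ψ x * g⁻¹⁻¹ = φ x
    rw [hg x]; group
  · rintro ⟨g, hg⟩
    refine ⟨g⁻¹, fun x => ?_⟩
    have : g * ψ x * g⁻¹ = φ x := congrFun (congrArg DFunLike.coe hg) x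
    rw [← this]; group

/-- The fixed points of conjugation by `g` are the homs into the centralizer. -/
def KSAux.fixedEquiv (Γ G : Type*) [Group Γ] [Group G] (g : G) :
    {φ : Γ →* G // ∀ x, g * φ x * g⁻¹ = φ x} ≃ (Γ →* Subgroup.centralizer ({g} : Set G)) where
  toFun φp := MonoidHom.codRestrict φp.1 _ (fun x => by
    rw [Subgroup.mem_centralizer_singleton_iff]
    conv_lhs => rw [← φp.2 x]
    group)
  invFun ψ := ⟨(Subgroup.centralizer ({g} : Set G)).subtype.comp ψ, fun x => by
    have : (ψ x : G) * g = g * (ψ x : G) :=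
      (Subgroup.mem_centralizer_singleton_iff.mp (ψ x).2)
    show g * (ψ x : G) * g⁻¹ = (ψ x : G)
    rw [mul_inv_eq_iff_eq_mul, this]⟩
  left_inv φp := rfl
  right_inv ψ := by ext x; rfl

/-- Burnside's lemma specialized to the conjugation action on homs. -/
lemma KSAux.key (Γ G : Type*) [Group Γ] [Group G] [Fintype G] [Finite (Γ →* G)] :
    ks G Γ * Fintype.card G
      = ∑ g : G, Nat.card (Γ →* Subgroup.centralizer ({g} : Set G)) := by
  letI := KSAux.conjSMul Γ G
  letI : ∀ g : G, Fintype (MulAction.fixedBy (Γ →* G) g) := fun g => Fintype.ofFinite _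
  letI : Fintype (Quotient (MulAction.orbitRel G (Γ →* G))) := Fintype.ofFinite _
  have hb := MulAction.sum_card_fixedBy_eq_card_orbits_mul_card_group (G := G) (X := Γ →* G)
  have hks : ks G Γ = Fintype.card (Quotient (MulAction.orbitRel G (Γ →* G))) := by
    rw [ks, KSAux.homConj_eq_orbitRel, Nat.card_eq_fintype_card]
  rw [hks, ← hb]
  refine Finset.sum_congr rfl (fun g _ => ?_)
  rw [← Nat.card_eq_fintype_card]
  refine Nat.card_congr (Equiv.trans ?_ (KSAux.fixedEquiv Γ G g))
  refine Equiv.subtypeEquivRight (fun φ => ?_)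
  show g • φ = φ ↔ _
  constructor
  · intro h x
    exact congrFun (congrArg DFunLike.coe h) x
  · intro h
    ext x
    exact h x

end Aux

section Aux2
variable {Γ C H : Type*} [Group Γ]

lemma KSAux.card_hom_comm (C : Type*) [Group C] [Finite C] (hc : ∀ a b : C, a * b = b * a)
    (n : ℕ) (e : Abelianization Γ ≃* Zg n) : Nat.card (Γ →* C) = Nat.card C ^ n := by
  letI : CommGroup C := { (inferInstance : Group C) with mul_comm := hc }
  have e1 : (Γ →* C) ≃ (Abelianization Γ →* C) := Abelianization.lift
  have e2 : (Abelianization Γ →* C) ≃ (Zg n →* C) :=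
    { toFun := fun f => f.comp e.symm.toMonoidHom
      invFun := fun f => f.comp e.toMonoidHom
      left_inv := fun f => by ext x; simp
      right_inv := fun f => by ext x; simp }
  have e3 : (Zg n →* C) ≃ ((Fin n → ℤ) →+ Additive C) :=
    (@AddMonoidHom.toMultiplicativeLeft (Fin n → ℤ) C _ _).symm
  have e4 : ((Fin n → ℤ) →+ Additive C) ≃ ((Fin n → ℤ) →ₗ[ℤ] Additive C) :=
    (addMonoidHomLequivInt (A := Fin n → ℤ) (B := Additive C) ℤ).toEquiv
  have e5 : ((Fin n → ℤ) →ₗ[ℤ] Additive C) ≃ (Fin n → Additive C) :=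
    ((Pi.basisFun ℤ (Fin n)).constr ℤ).toEquiv.symm
  rw [Nat.card_congr (((e1.trans e2).trans e3).trans (e4.trans e5)), Nat.card_pi,
    Finset.prod_const, Finset.card_univ, Fintype.card_fin,
    Nat.card_congr (Additive.toMul (α := C))]

lemma KSAux.card_hom_coprod (Γ' H : Type*) [Group Γ'] [Group H] :
    Nat.card (Monoid.Coprod (Multiplicative ℤ) Γ' →* H)
      = Nat.card H * Nat.card (Γ' →* H) := by
  rw [Nat.card_congr (Monoid.Coprod.liftEquiv
      (M := Multiplicative ℤ) (N := Γ') (P := H)).symm,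
    Nat.card_prod, Nat.card_congr (zpowersHom H).symm]

lemma KSAux.centralizer_one (G : Type*) [Group G] :
    Subgroup.centralizer ({(1 : G)} : Set G) = ⊤ := by
  rw [eq_top_iff]
  intro x _
  rw [Subgroup.mem_centralizer_singleton_iff]
  simp

end Aux2

set_option maxHeartbeats 4000000

def KSAux.c (g : A5) : ℕ := (Finset.univ.filter (fun h : A5 => h * g = g * h)).card

namespace KSAux

lemma c_mem : ∀ g : A5, g = 1 ∨ c g = 4 ∨ c g = 3 ∨ c g = 5 := by decide

lemma filter_counts :
    (Finset.univ.filter (fun g : A5 => c g = 3)).card = 20 ∧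
    (Finset.univ.filter (fun g : A5 => c g = 4)).card = 15 ∧
    (Finset.univ.filter (fun g : A5 => c g = 5)).card = 24 := by decide

lemma card_A5 : Nat.card A5 = 60 := by
  have h := two_mul_card_alternatingGroup (α := Fin 5)
  rw [Fintype.card_perm, Fintype.card_fin, ← Nat.card_eq_fintype_card] at h
  have h5 : Nat.factorial 5 = 120 := rfl
  have h' : 2 * Nat.card A5 = Nat.factorial 5 := h
  omega

lemma c_one : c 1 = 60 := by
  have h : (Finset.univ.filter (fun h : A5 => h * 1 = 1 * h)) = Finset.univ :=
    Finset.filter_true_of_mem (fun x _ => by rw [mul_one, one_mul])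
  rw [c, h, Finset.card_univ, ← Nat.card_eq_fintype_card]
  exact card_A5

lemma card_centralizer (g : A5) :
    Nat.card (Subgroup.centralizer ({g} : Set A5)) = c g := by
  rw [Nat.card_congr (Equiv.subtypeEquivRight
      (fun x : A5 => Subgroup.mem_centralizer_singleton_iff (g := g))),
    Nat.card_eq_fintype_card, Fintype.card_subtype, c]

lemma comm_centralizer (g : A5) (hg : g ≠ 1) :
    ∀ a b : Subgroup.centralizer ({g} : Set A5), a * b = b * a := by
  rcases c_mem g with h | h | h | h
  · exact absurd h hg
  · haveI : Fact (Nat.Prime 2) := ⟨by norm_num⟩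
    exact IsPGroup.commutative_of_card_eq_prime_sq (p := 2)
      (by rw [card_centralizer, h]; norm_num)
  · haveI : Fact (Nat.Prime 3) := ⟨by norm_num⟩
    haveI : IsCyclic (Subgroup.centralizer ({g} : Set A5)) :=
      isCyclic_of_prime_card (p := 3) (by rw [card_centralizer, h])
    exact IsCyclic.commGroup.mul_comm
  · haveI : Fact (Nat.Prime 5) := ⟨by norm_num⟩
    haveI : IsCyclic (Subgroup.centralizer ({g} : Set A5)) :=
      isCyclic_of_prime_card (p := 5) (by rw [card_centralizer, h])
    exact IsCyclic.commGroup.mul_comm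

lemma erase_filter_card (v : ℕ) (hv : v ≠ 60) (n : ℕ)
    (hn : (Finset.univ.filter (fun g : A5 => c g = v)).card = n) :
    ((Finset.univ.erase (1 : A5)).filter (fun g => c g = v)).card = n := by
  have h1 : (1:A5) ∉ Finset.univ.filter (fun g : A5 => c g = v) := by
    rw [Finset.mem_filter, c_one]
    rintro ⟨-, h⟩
    exact hv h.symm
  rw [Finset.filter_erase, Finset.erase_eq_of_notMem h1, hn]

lemma sumA5 (N : A5 → ℕ) (F : ℕ → ℕ) (hN : ∀ g : A5, g ≠ 1 → N g = F (c g)) :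
    ∑ g : A5, N g = N 1 + (20 * F 3 + 15 * F 4 + 24 * F 5) := by
  classical
  have h0 := Finset.sum_erase_add Finset.univ N (Finset.mem_univ (1:A5))
  suffices hkey : ∑ g ∈ Finset.univ.erase (1 : A5), N g
      = 20 * F 3 + 15 * F 4 + 24 * F 5 by omega
  have hcongr : ∑ g ∈ Finset.univ.erase (1 : A5), N g
      = ∑ g ∈ Finset.univ.erase (1 : A5), F (c g) :=
    Finset.sum_congr rfl (fun g hg => hN g (Finset.mem_erase.mp hg).1)
  rw [hcongr,
    ← Finset.sum_filter_add_sum_filter_not (Finset.univ.erase (1 : A5)) (fun g => c g = 3),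
    ← Finset.sum_filter_add_sum_filter_not
      ((Finset.univ.erase (1 : A5)).filter (fun g => ¬ c g = 3)) (fun g => c g = 4)]
  have h3 : ∑ g ∈ (Finset.univ.erase (1 : A5)).filter (fun g => c g = 3), F (c g)
      = 20 * F 3 := by
    rw [Finset.sum_congr rfl (fun g hg => by rw [(Finset.mem_filter.mp hg).2]),
      Finset.sum_const, erase_filter_card 3 (by norm_num) 20 filter_counts.1, smul_eq_mul]
  have e4 : ((Finset.univ.erase (1 : A5)).filter (fun g => ¬ c g = 3)).filter
        (fun g => c g = 4)
      = (Finset.univ.erase (1 : A5)).filter (fun g => c g = 4) := by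
    rw [Finset.filter_filter]
    exact Finset.filter_congr (fun g _ => by constructor <;> intro h <;> omega)
  have h4 : ∑ g ∈ ((Finset.univ.erase (1 : A5)).filter (fun g => ¬ c g = 3)).filter
        (fun g => c g = 4), F (c g) = 15 * F 4 := by
    rw [e4, Finset.sum_congr rfl (fun g hg => by rw [(Finset.mem_filter.mp hg).2]),
      Finset.sum_const, erase_filter_card 4 (by norm_num) 15 filter_counts.2.1, smul_eq_mul]
  have e5 : ((Finset.univ.erase (1 : A5)).filter (fun g => ¬ c g = 3)).filter
        (fun g => ¬ c g = 4)
      = (Finset.univ.erase (1 : A5)).filter (fun g => c g = 5) := by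
    rw [Finset.filter_filter]
    refine Finset.filter_congr (fun g hg => ?_)
    have := c_mem g
    have h1 : g ≠ 1 := (Finset.mem_erase.mp hg).1
    rcases this with h | h | h | h
    · exact absurd h h1
    all_goals constructor <;> intro hh <;> omega
  have h5 : ∑ g ∈ ((Finset.univ.erase (1 : A5)).filter (fun g => ¬ c g = 3)).filter
        (fun g => ¬ c g = 4), F (c g) = 24 * F 5 := by
    rw [e5, Finset.sum_congr rfl (fun g hg => by rw [(Finset.mem_filter.mp hg).2]),
      Finset.sum_const, erase_filter_card 5 (by norm_num) 24 filter_counts.2.2, smul_eq_mul]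
  rw [h3, h4, h5]
  omega

end KSAux


set_option maxHeartbeats 1000000 in
theorem statement_17 (g : ℕ) (hg : 1 ≤ g) (Γ' : Type*) [Group Γ'] (hΓ' : Group.FG Γ')
    (hab : Nonempty (Abelianization Γ' ≃* Zg (g - 1))) :
    (ks A5 (Monoid.Coprod (Multiplicative ℤ) Γ') : ℤ) =
        60 * (ks A5 Γ' : ℤ) - 19 * 3 ^ (g - 1) - 14 * 4 ^ (g - 1) - 22 * 5 ^ (g - 1) ∧
    (60 : ℤ) ∣ (ks A5 (Monoid.Coprod (Multiplicative ℤ) Γ') : ℤ)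
        + 19 * 3 ^ (g - 1) + 14 * 4 ^ (g - 1) + 22 * 5 ^ (g - 1) := by
  obtain ⟨e⟩ := hab
  haveI hf1 : Finite (Γ' →* A5) := KSAux.finite_hom hΓ'
  haveI hf0 : Finite (Multiplicative ℤ →* A5) := Finite.of_equiv _ (zpowersHom A5)
  haveI hf2 : Finite (Monoid.Coprod (Multiplicative ℤ) Γ' →* A5) :=
    Finite.of_equiv _ (Monoid.Coprod.liftEquiv (M := Multiplicative ℤ) (N := Γ') (P := A5))
  have hN : ∀ gg : A5, gg ≠ 1 →
      Nat.card (Γ' →* ↥(Subgroup.centralizer ({gg} : Set A5)))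
        = (KSAux.c gg) ^ (g - 1) := by
    intro gg hgg
    rw [KSAux.card_hom_comm _ (KSAux.comm_centralizer gg hgg) (g - 1) e,
      KSAux.card_centralizer]
  have hw1 : Nat.card (Γ' →* ↥(Subgroup.centralizer ({(1 : A5)} : Set A5)))
      = Nat.card (Γ' →* A5) := by
    rw [KSAux.centralizer_one]
    exact Nat.card_congr (KSAux.postcompEquiv Subgroup.topEquiv)
  have hN' : ∀ gg : A5, gg ≠ 1 →
      Nat.card (Monoid.Coprod (Multiplicative ℤ) Γ' →* ↥(Subgroup.centralizer ({gg} : Set A5)))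
        = (KSAux.c gg) * (KSAux.c gg) ^ (g - 1) := by
    intro gg hgg
    rw [KSAux.card_hom_coprod, hN gg hgg, KSAux.card_centralizer]
  have hcard : Fintype.card A5 = 60 := by
    rw [← Nat.card_eq_fintype_card]
    exact KSAux.card_A5
  have hb1 := KSAux.key Γ' A5
  have hb2 := KSAux.key (Monoid.Coprod (Multiplicative ℤ) Γ') A5
  rw [KSAux.sumA5 _ (fun m => m ^ (g - 1)) hN, hcard] at hb1
  rw [KSAux.sumA5 _ (fun m => m * m ^ (g - 1)) hN', hcard] at hb2
  have hb1' : ks A5 Γ' * 60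
      = Nat.card (Γ' →* ↥(Subgroup.centralizer ({(1 : A5)} : Set A5)))
        + (20 * 3 ^ (g - 1) + 15 * 4 ^ (g - 1) + 24 * 5 ^ (g - 1)) := hb1
  have hb2' : ks A5 (Monoid.Coprod (Multiplicative ℤ) Γ') * 60
      = Nat.card (Monoid.Coprod (Multiplicative ℤ) Γ'
            →* ↥(Subgroup.centralizer ({(1 : A5)} : Set A5)))
        + (20 * (3 * 3 ^ (g - 1)) + 15 * (4 * 4 ^ (g - 1)) + 24 * (5 * 5 ^ (g - 1))) := hb2
  have hw2 : Nat.card (Monoid.Coprod (Multiplicative ℤ) Γ'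
        →* ↥(Subgroup.centralizer ({(1 : A5)} : Set A5)))
      = 60 * Nat.card (Γ' →* A5) := by
    rw [KSAux.card_hom_coprod, KSAux.card_centralizer, KSAux.c_one, hw1]
  rw [hw1] at hb1'
  rw [hw2] at hb2'
  have H1 : (ks A5 Γ' : ℤ) * 60 = (Nat.card (Γ' →* A5) : ℤ)
      + (20 * 3 ^ (g - 1) + 15 * 4 ^ (g - 1) + 24 * 5 ^ (g - 1)) := by
    exact_mod_cast hb1'
  have H2 : (ks A5 (Monoid.Coprod (Multiplicative ℤ) Γ') : ℤ) * 60
      = 60 * (Nat.card (Γ' →* A5) : ℤ)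
        + (20 * (3 * 3 ^ (g - 1)) + 15 * (4 * 4 ^ (g - 1)) + 24 * (5 * 5 ^ (g - 1))) := by
    exact_mod_cast hb2'
  constructor
  · linarith
  · exact ⟨(ks A5 Γ' : ℤ), by linarith⟩
end
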